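/- With ρ and τ_W(p) as defined, the quantity tr[ρ (τ_W(p)ᵀ ⊗ H_{π/4})] = (3 − √2 − (1+√2)p)/12 is strictly negative if and only if p > 4√2 − 5. -/

import Mathlib

open Matrix Kronecker Real ComplexOrder

noncomputable section

def σx : Matrix (Fin 2) (Fin 2) ℂ := !![0, 1; 1, 0]
def σy : Matrix (Fin 2) (Fin 2) ℂ := !![0, -Complex.I; Complex.I, 0]
def σz : Matrix (Fin 2) (Fin 2) ℂ := !![1, 0; 0, -1]

def pauli : Fin 4 → Matrix (Fin 2) (Fin 2) ℂ := ![1, σx, σy, σz]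

def R : Matrix (Fin 4) (Fin 4) ℝ :=
  (9 : ℝ)⁻¹ • !![9, 3, 3, 3; 1, -1, 3, -1; 1, -1, 3, -1; 1, -1, 3, -1]

/-- The 4-qubit ancillary state `ρ = (1/16) Σ_{i,j} R_{ij} σᵢ⊗σⱼ⊗σᵢ⊗σⱼ`. -/
def ancilla :
    Matrix ((Fin 2 × Fin 2) × (Fin 2 × Fin 2)) ((Fin 2 × Fin 2) × (Fin 2 × Fin 2)) ℂ :=
  (16 : ℂ)⁻¹ • ∑ i : Fin 4, ∑ j : Fin 4,
    (R i j : ℂ) • ((pauli i ⊗ₖ pauli j) ⊗ₖ (pauli i ⊗ₖ pauli j))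

/-- Singlet `|Ψ⁻⟩ = (|01⟩ − |10⟩)/√2`. -/
def PsiM : Fin 2 × Fin 2 → ℂ :=
  fun p => (Real.sqrt 2 : ℂ)⁻¹ *
    (if p = (0, 1) then 1 else if p = (1, 0) then -1 else 0)

/-- Two-qubit Werner state `τ_W(p) = p |Ψ⁻⟩⟨Ψ⁻| + (1−p) 1₄/4`. -/
def wernerState (p : ℝ) : Matrix (Fin 2 × Fin 2) (Fin 2 × Fin 2) ℂ :=
  (p : ℂ) • vecMulVec PsiM (star PsiM) + (((1 - p) / 4 : ℝ) : ℂ) • 1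

/-- `H_{π/4} = 1₄ − (1/√2)(σx⊗σx) − (1/√2)(σz⊗σz)`. -/
def Hpi4 : Matrix (Fin 2 × Fin 2) (Fin 2 × Fin 2) ℂ :=
  1 - (Real.cos (π / 4) : ℂ) • (σx ⊗ₖ σx) - (Real.sin (π / 4) : ℂ) • (σz ⊗ₖ σz)

/-- The observable `τ_W(p)ᵀ ⊗ H_{π/4}`, with `τ_W(p)ᵀ` acting on qubits 1 and 3
of `ρ` (the `σᵢ` factors) and `H_{π/4}` acting on qubits 2 and 4 (the `σⱼ` factors). -/
def obs (p : ℝ) :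
    Matrix ((Fin 2 × Fin 2) × (Fin 2 × Fin 2)) ((Fin 2 × Fin 2) × (Fin 2 × Fin 2)) ℂ :=
  fun q r =>
    (wernerState p)ᵀ (q.1.1, q.2.1) (r.1.1, r.2.1) * Hpi4 (q.1.2, q.2.2) (r.1.2, r.2.2)


set_option maxHeartbeats 4000000 in
/-- `tr[ρ (τ_W(p)ᵀ ⊗ H_{π/4})] = (3 − √2 − (1+√2)p)/12`, and this quantity is
strictly negative if and only if `p > 4√2 − 5`. -/
theorem trace_neg_iff (p : ℝ) :
    (ancilla * obs p).trace
      = (((3 - Real.sqrt 2 - (1 + Real.sqrt 2) * p) / 12 : ℝ) : ℂ) ∧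
    ((3 - Real.sqrt 2 - (1 + Real.sqrt 2) * p) / 12 < 0 ↔ p > 4 * Real.sqrt 2 - 5) := by
  constructor
  ·
    have hR00 : ((R 0 0 : ℝ) : ℂ) = 1 := by norm_num [R, Matrix.vecHead, Matrix.vecTail, Matrix.cons_val_two, Matrix.cons_val_three]
    have hR01 : ((R 0 1 : ℝ) : ℂ) = 1/3 := by norm_num [R, Matrix.vecHead, Matrix.vecTail, Matrix.cons_val_two, Matrix.cons_val_three]
    have hR02 : ((R 0 2 : ℝ) : ℂ) = 1/3 := by norm_num [R, Matrix.vecHead, Matrix.vecTail, Matrix.cons_val_two, Matrix.cons_val_three]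
    have hR03 : ((R 0 3 : ℝ) : ℂ) = 1/3 := by norm_num [R, Matrix.vecHead, Matrix.vecTail, Matrix.cons_val_two, Matrix.cons_val_three]
    have hR10 : ((R 1 0 : ℝ) : ℂ) = 1/9 := by norm_num [R, Matrix.vecHead, Matrix.vecTail, Matrix.cons_val_two, Matrix.cons_val_three]
    have hR11 : ((R 1 1 : ℝ) : ℂ) = -1/9 := by norm_num [R, Matrix.vecHead, Matrix.vecTail, Matrix.cons_val_two, Matrix.cons_val_three]
    have hR12 : ((R 1 2 : ℝ) : ℂ) = 1/3 := by norm_num [R, Matrix.vecHead, Matrix.vecTail, Matrix.cons_val_two, Matrix.cons_val_three]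
    have hR13 : ((R 1 3 : ℝ) : ℂ) = -1/9 := by norm_num [R, Matrix.vecHead, Matrix.vecTail, Matrix.cons_val_two, Matrix.cons_val_three]
    have hR20 : ((R 2 0 : ℝ) : ℂ) = 1/9 := by norm_num [R, Matrix.vecHead, Matrix.vecTail, Matrix.cons_val_two, Matrix.cons_val_three]
    have hR21 : ((R 2 1 : ℝ) : ℂ) = -1/9 := by norm_num [R, Matrix.vecHead, Matrix.vecTail, Matrix.cons_val_two, Matrix.cons_val_three]
    have hR22 : ((R 2 2 : ℝ) : ℂ) = 1/3 := by norm_num [R, Matrix.vecHead, Matrix.vecTail, Matrix.cons_val_two, Matrix.cons_val_three]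
    have hR23 : ((R 2 3 : ℝ) : ℂ) = -1/9 := by norm_num [R, Matrix.vecHead, Matrix.vecTail, Matrix.cons_val_two, Matrix.cons_val_three]
    have hR30 : ((R 3 0 : ℝ) : ℂ) = 1/9 := by norm_num [R, Matrix.vecHead, Matrix.vecTail, Matrix.cons_val_two, Matrix.cons_val_three]
    have hR31 : ((R 3 1 : ℝ) : ℂ) = -1/9 := by norm_num [R, Matrix.vecHead, Matrix.vecTail, Matrix.cons_val_two, Matrix.cons_val_three]
    have hR32 : ((R 3 2 : ℝ) : ℂ) = 1/3 := by norm_num [R, Matrix.vecHead, Matrix.vecTail, Matrix.cons_val_two, Matrix.cons_val_three]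
    have hR33 : ((R 3 3 : ℝ) : ℂ) = -1/9 := by norm_num [R, Matrix.vecHead, Matrix.vecTail, Matrix.cons_val_two, Matrix.cons_val_three]

    simp only [Matrix.trace, Matrix.diag, Matrix.mul_apply, Fintype.sum_prod_type,
      Fin.sum_univ_two, ancilla, Fin.sum_univ_four, hR00, hR01, hR02, hR03, hR10, hR11, hR12, hR13, hR20, hR21, hR22, hR23, hR30, hR31, hR32, hR33, obs, wernerState, Hpi4, PsiM, pauli,
      σx, σy, σz, Real.cos_pi_div_four, Real.sin_pi_div_four,
      Matrix.smul_apply, Matrix.sum_apply, Matrix.kroneckerMap_apply,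
      Matrix.vecMulVec_apply, Matrix.transpose_apply, Matrix.add_apply, Matrix.sub_apply,
      Matrix.one_apply, Matrix.cons_val', Matrix.cons_val_zero, Matrix.cons_val_one,
      Matrix.head_cons, Matrix.empty_val', Matrix.cons_val_fin_one, Matrix.head_fin_const,
      Pi.star_apply, smul_eq_mul, Prod.mk.injEq, Fin.isValue,
      Matrix.cons_val_two, Matrix.cons_val_three, Matrix.tail_cons]
    norm_num
    have hs : ((Real.sqrt 2 : ℝ) : ℂ) * ((Real.sqrt 2 : ℝ) : ℂ) = 2 := by
      norm_cast
      exact Real.mul_self_sqrt (by norm_num)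
    have hinv : ((Real.sqrt 2 : ℝ) : ℂ)⁻¹ * ((Real.sqrt 2 : ℝ) : ℂ)⁻¹ = 1/2 := by
      rw [← mul_inv, hs]
      norm_num
    rw [hinv]
    ring
  · have h2 : Real.sqrt 2 * Real.sqrt 2 = 2 := Real.mul_self_sqrt (by norm_num)
    have h0 : (0:ℝ) ≤ Real.sqrt 2 := Real.sqrt_nonneg 2
    constructor <;> intro h
    · nlinarith [h]
    · nlinarith [h]
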